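/- Let h > 0, λ > 0, x₀, y₀ ∈ ℝ, let φ(x) = (λ/(πh))^{1/4}·exp{ (i/h)·( (iλ/2)·(x − x₀)² + y₀·x ) }, and for t ∈ (0, π) define φ^t(y) = ∫_ℝ G(y, x, t)·φ(x) dx, where G(y, x, t) = e^{−iπ/4}·(2πh·sin t)^{−1/2}·exp{ (i/h)·( (cot t/2)·(y² + x²) − y·x/sin t ) } is the Mehler propagator. Then for all y ∈ ℝ, |φ^t(y)|² = (λ_t/(πh))^{1/2}·exp(−λ_t·(y − c_t)²/h), where c_t = x₀·cos t + y₀·sin t and λ_t = (λ^{−1}·cos² t + λ·sin² t)^{−1}. -/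

import Mathlib

open MeasureTheory Real Complex

/-- Evolution of the Gaussian thermodynamic wavefunction by the Mehler propagator:
for `φ(x) = (λ/(πh))^{1/4}·exp{(i/h)((iλ/2)(x − x₀)² + y₀x)}` and
`φ^t(y) = ∫ G(y, x, t) φ(x) dx`, one has
`|φ^t(y)|² = (λ_t/(πh))^{1/2}·e^{−λ_t(y − c_t)²/h}` with
`c_t = x₀ cos t + y₀ sin t`, `λ_t = (λ⁻¹ cos² t + λ sin² t)⁻¹`. -/
theorem mehler_evolution_of_gaussian (h lam x₀ y₀ : ℝ) (hh : h > 0) (hlam : lam > 0) :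
    let G : ℝ → ℝ → ℝ → ℂ := fun y x t =>
      Complex.exp (-(Complex.I * π / 4)) * ((Real.sqrt (2 * π * h * Real.sin t))⁻¹ : ℝ) *
        Complex.exp ((Complex.I / (h : ℂ)) *
          ((((Real.cos t / Real.sin t) / 2) * (y ^ 2 + x ^ 2) -
            y * x / Real.sin t : ℝ) : ℂ))
    let φ : ℝ → ℂ := fun x =>
      ((lam / (π * h)) ^ ((1 : ℝ) / 4) : ℝ) *
        Complex.exp ((Complex.I / (h : ℂ)) *
          ((Complex.I * (lam : ℂ) / 2) * ((x : ℂ) - (x₀ : ℂ)) ^ 2 + (y₀ : ℂ) * (x : ℂ)))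
    ∀ t ∈ Set.Ioo (0 : ℝ) π, ∀ y : ℝ,
      ‖∫ x : ℝ, G y x t * φ x‖ ^ 2 =
        Real.sqrt (((lam⁻¹ * Real.cos t ^ 2 + lam * Real.sin t ^ 2)⁻¹) / (π * h)) *
          Real.exp (-((lam⁻¹ * Real.cos t ^ 2 + lam * Real.sin t ^ 2)⁻¹ *
            (y - (x₀ * Real.cos t + y₀ * Real.sin t)) ^ 2 / h)) := by
  intro G φ t ht y
  obtain ⟨ht0, htπ⟩ := ht
  set s := Real.sin t with hs_def
  set co := Real.cos t with hco_def
  have hs : 0 < s := Real.sin_pos_of_pos_of_lt_pi ht0 htπ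
  have hh' : (h : ℝ) ≠ 0 := ne_of_gt hh
  have hs' : s ≠ 0 := ne_of_gt hs
  have hl' : lam ≠ 0 := ne_of_gt hlam
  have hhc : (h : ℂ) ≠ 0 := by exact_mod_cast hh'
  have hsc : (s : ℂ) ≠ 0 := by exact_mod_cast hs'
  set b : ℂ := ((-(lam/(2*h)) : ℝ) : ℂ) + ((co/(s*(2*h)) : ℝ) : ℂ) * Complex.I with hb_def
  set c : ℂ := ((lam*x₀/h : ℝ) : ℂ) + ((y₀/h - y/(s*h) : ℝ) : ℂ) * Complex.I with hc_def
  set d : ℂ := ((-(lam*x₀^2/(2*h)) : ℝ) : ℂ) + ((co*y^2/(s*(2*h)) : ℝ) : ℂ) * Complex.I with hd_def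
  set C : ℂ := Complex.exp (-(Complex.I * π / 4)) * ((Real.sqrt (2 * π * h * s))⁻¹ : ℝ) *
      ((lam / (π * h)) ^ ((1 : ℝ) / 4) : ℝ) with hC_def
  have hbre : b.re < 0 := by
    have hb : b.re = -(lam/(2*h)) := by
      simp only [hb_def, Complex.add_re, Complex.ofReal_re, Complex.mul_re, Complex.I_re,
        Complex.I_im, Complex.ofReal_im, mul_zero, mul_one, zero_mul, sub_zero, add_zero,
        zero_sub, mul_comm]
    rw [hb, neg_lt_zero]
    positivity
  have key : ∀ x : ℝ, G y x t * φ x = C * Complex.exp (b * x ^ 2 + c * x + d) := by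
    intro x
    have hexp : (Complex.I / (h : ℂ)) *
          ((((co / s) / 2) * (y ^ 2 + x ^ 2) - y * x / s : ℝ) : ℂ)
        + (Complex.I / (h : ℂ)) *
          ((Complex.I * (lam : ℂ) / 2) * ((x : ℂ) - (x₀ : ℂ)) ^ 2 + (y₀ : ℂ) * (x : ℂ))
        = b * x ^ 2 + c * x + d := by
      rw [hb_def, hc_def, hd_def]
      push_cast
      linear_combination ((lam:ℂ) * ((x:ℂ)-(x₀:ℂ))^2/(2*(h:ℂ))) * Complex.I_sq
    calc G y x t * φ x
        = C * (Complex.exp ((Complex.I / (h : ℂ)) *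
            ((((co / s) / 2) * (y ^ 2 + x ^ 2) - y * x / s : ℝ) : ℂ)) *
          Complex.exp ((Complex.I / (h : ℂ)) *
            ((Complex.I * (lam : ℂ) / 2) * ((x : ℂ) - (x₀ : ℂ)) ^ 2 + (y₀ : ℂ) * (x : ℂ)))) := by
          simp only [G, φ, hC_def]; ring
      _ = C * Complex.exp (b * x ^ 2 + c * x + d) := by rw [← Complex.exp_add, hexp]
  rw [show (∫ x : ℝ, G y x t * φ x) = ∫ x : ℝ, C * Complex.exp (b * x ^ 2 + c * x + d) from
      integral_congr_ae (Filter.Eventually.of_forall key), integral_const_mul,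
    integral_cexp_quadratic hbre]
  -- now the norm computation
  set D' : ℝ := lam^2*s^2+co^2 with hD'val
  have hD'pos : 0 < D' := by rw [hD'val]; positivity
  have hD' : D' ≠ 0 := ne_of_gt hD'pos
  have hb0 : b ≠ 0 := by
    intro hb0
    rw [hb0] at hbre
    exact lt_irrefl 0 (by simpa using hbre)
  have hπb : ((π : ℂ) / -b) ≠ 0 :=
    div_ne_zero (by exact_mod_cast Real.pi_ne_zero) (neg_ne_zero.mpr hb0)
  have hwre : (d - c^2/(4*b)).re = -(lam/D' * (y - (x₀*co + y₀*s))^2/(2*h)) := by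
    rw [hb_def, hc_def, hd_def]
    have hnsq : Complex.normSq (4 * ((((-(lam/(2*h)) : ℝ) : ℂ) + ((co/(s*(2*h)) : ℝ) : ℂ) * Complex.I)))
        = 4*D'/(h^2*s^2) := by
      rw [hD'val]
      simp only [Complex.normSq_apply, Complex.mul_re, Complex.mul_im, Complex.add_re,
        Complex.add_im, Complex.ofReal_re, Complex.ofReal_im, Complex.I_re, Complex.I_im,
        Complex.re_ofNat, Complex.im_ofNat, mul_zero, zero_mul, mul_one, sub_zero, add_zero,
        zero_add]
      field_simp
      ring
    rw [Complex.sub_re, Complex.div_re, hnsq]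
    simp only [pow_two, Complex.mul_re, Complex.mul_im, Complex.add_re, Complex.add_im,
      Complex.ofReal_re, Complex.ofReal_im, Complex.I_re, Complex.I_im, Complex.re_ofNat,
      Complex.im_ofNat, mul_zero, zero_mul, mul_one, sub_zero, add_zero, zero_add, zero_sub]
    field_simp
    rw [hD'val]
    ring
  have habsb : ‖b‖ = Real.sqrt D' / (2*h*s) := by
    rw [Complex.norm_def]
    have hnsqb : Complex.normSq b = D' / (2*h*s)^2 := by
      rw [hb_def, hD'val]
      simp only [Complex.normSq_apply, Complex.mul_re, Complex.mul_im, Complex.add_re,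
        Complex.add_im, Complex.ofReal_re, Complex.ofReal_im, Complex.I_re, Complex.I_im,
        mul_zero, zero_mul, mul_one, sub_zero, add_zero, zero_add]
      field_simp
    rw [hnsqb, Real.sqrt_div hD'pos.le, Real.sqrt_sq (by positivity)]
  have hQ : ‖(π : ℂ) / -b‖ = 2*π*h*s/Real.sqrt D' := by
    rw [norm_div, Complex.norm_real, Real.norm_eq_abs, abs_of_pos Real.pi_pos, norm_neg, habsb]
    field_simp
  have hnC : ‖C‖ = (Real.sqrt (2*π*h*s))⁻¹ * (lam/(π*h))^((1:ℝ)/4) := by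
    rw [hC_def]
    simp only [norm_mul, Complex.norm_exp, Complex.norm_real, Real.norm_eq_abs]
    rw [show (-(Complex.I * (π:ℂ) / 4)).re = 0 by simp, Real.exp_zero, one_mul,
      _root_.abs_of_nonneg, _root_.abs_of_nonneg] <;> positivity
  have hq : ‖((π : ℂ) / -b) ^ ((1:ℂ)/2)‖ = (2*π*h*s/Real.sqrt D') ^ ((1:ℝ)/2) := by
    rw [Complex.norm_cpow_of_ne_zero hπb, hQ]
    norm_num
  rw [norm_mul, hnC, norm_mul, hq, Complex.norm_exp, hwre]
  -- pure real computation now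
  have hsq : ((2*π*h*s/Real.sqrt D') ^ ((1:ℝ)/2))^2 = 2*π*h*s/Real.sqrt D' := by
    rw [← Real.rpow_natCast (_ ^ ((1:ℝ)/2)) 2, ← Real.rpow_mul (by positivity)]
    norm_num
  have hr2 : ((lam/(π*h)) ^ ((1:ℝ)/4))^2 = Real.sqrt (lam/(π*h)) := by
    rw [← Real.rpow_natCast (_ ^ ((1:ℝ)/4)) 2, ← Real.rpow_mul (by positivity),
      Real.sqrt_eq_rpow]
    norm_num
  have ha2 : ((Real.sqrt (2*π*h*s))⁻¹)^2 = (2*π*h*s)⁻¹ := by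
    rw [inv_pow, Real.sq_sqrt (by positivity)]
  have hexpeq : Real.exp (-(lam/D' * (y - (x₀*co + y₀*s))^2/(2*h))) ^ 2
      = Real.exp (-((lam⁻¹ * co ^ 2 + lam * s ^ 2)⁻¹ * (y - (x₀ * co + y₀ * s)) ^ 2 / h)) := by
    rw [← Real.exp_nat_mul]
    congr 1
    have hlt : (lam⁻¹ * co ^ 2 + lam * s ^ 2)⁻¹ = lam / D' := by
      rw [show lam⁻¹ * co ^ 2 + lam * s ^ 2 = D'/lam from by
        rw [hD'val]; field_simp; ring, inv_div]
    rw [hlt]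
    push_cast
    field_simp
  have hpre : ((Real.sqrt (2*π*h*s))⁻¹ * (lam/(π*h)) ^ ((1:ℝ)/4) *
      ((2*π*h*s/Real.sqrt D') ^ ((1:ℝ)/2)))^2
      = Real.sqrt ((lam⁻¹ * co ^ 2 + lam * s ^ 2)⁻¹ / (π * h)) := by
    have hlt : (lam⁻¹ * co ^ 2 + lam * s ^ 2)⁻¹ = lam / D' := by
      rw [show lam⁻¹ * co ^ 2 + lam * s ^ 2 = D'/lam from by
        rw [hD'val]; field_simp; ring, inv_div]
    have hlt2 : (lam⁻¹ * co ^ 2 + lam * s ^ 2)⁻¹ / (π*h) = (lam/(π*h)) / D' := by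
      rw [hlt]; ring
    rw [hlt2, Real.sqrt_div (by positivity), mul_pow, mul_pow, ha2, hr2, hsq]
    have hsd : Real.sqrt D' ≠ 0 := by positivity
    field_simp [Real.pi_ne_zero]
  calc ((Real.sqrt (2*π*h*s))⁻¹ * (lam/(π*h)) ^ ((1:ℝ)/4) *
        ((2*π*h*s/Real.sqrt D') ^ ((1:ℝ)/2) *
          Real.exp (-(lam/D' * (y - (x₀*co + y₀*s))^2/(2*h)))))^2
      = ((Real.sqrt (2*π*h*s))⁻¹ * (lam/(π*h)) ^ ((1:ℝ)/4) *
          ((2*π*h*s/Real.sqrt D') ^ ((1:ℝ)/2)))^2 *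
        Real.exp (-(lam/D' * (y - (x₀*co + y₀*s))^2/(2*h)))^2 := by ring
    _ = Real.sqrt ((lam⁻¹ * co ^ 2 + lam * s ^ 2)⁻¹ / (π * h)) *
        Real.exp (-((lam⁻¹ * co ^ 2 + lam * s ^ 2)⁻¹ * (y - (x₀ * co + y₀ * s)) ^ 2 / h)) := by
        rw [hpre, hexpeq]
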